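/- For k with (log₂x)² ≤ k ≤ (log x)/(3 log log x) and k ≫ (log x)/(log log x)², one has B_k · π(x,k) ≪ x, i.e., the product of the k-th Bell number and the count of n ≤ x with exactly k distinct prime factors is O(x). -/

import Mathlib

open Real Finset Filter

/-- Number of unordered factorizations of `n` into parts `> 1`. -/
noncomputable def littlef (n : ℕ) : ℕ :=
  Nat.card {s : Multiset ℕ // s.prod = n ∧ ∀ a ∈ s, 1 < a}

/-- Number of unordered factorizations of `n` into pairwise coprime parts `> 1`. -/
noncomputable def bigF (n : ℕ) : ℕ :=
  Nat.card {s : Multiset ℕ // s.prod = n ∧ (∀ a ∈ s, 1 < a) ∧ s.Pairwise Nat.Coprime}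

/-- Number of ordered factorizations of `n` into parts `> 1`. -/
noncomputable def littleg (n : ℕ) : ℕ :=
  Nat.card {l : List ℕ // l.prod = n ∧ ∀ a ∈ l, 1 < a}

/-- Number of ordered factorizations of `n` into pairwise coprime parts `> 1`. -/
noncomputable def bigG (n : ℕ) : ℕ :=
  Nat.card {l : List ℕ // l.prod = n ∧ (∀ a ∈ l, 1 < a) ∧ l.Pairwise Nat.Coprime}

/-- The `k`-th Bell number: the number of set partitions of a `k`-element set. -/
noncomputable def bell (k : ℕ) : ℕ :=
  Nat.card (Finpartition (Finset.univ : Finset (Fin k)))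

/-- The `k`-th ordered Bell (Fubini) number: the number of ordered set partitions
of a `k`-element set, i.e. lists of pairwise disjoint nonempty blocks covering it. -/
noncomputable def fubini (k : ℕ) : ℕ :=
  Nat.card {l : List (Finset (Fin k)) //
    (∀ s ∈ l, s.Nonempty) ∧ l.Pairwise Disjoint ∧ l.foldr (· ∪ ·) ∅ = Finset.univ}

/-- `ω n`: the number of distinct prime factors of `n`. -/
def omegaN (n : ℕ) : ℕ := n.primeFactors.card

/-- `π(x, k)`: the number of `2 ≤ n ≤ x` with exactly `k` distinct prime factors. -/
noncomputable def piOmega (x : ℝ) (k : ℕ) : ℕ :=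
  Nat.card {n : ℕ // 2 ≤ n ∧ (n : ℝ) ≤ x ∧ omegaN n = k}

/-- `L(x) = exp(log x · log log log x / log log x)`. -/
noncomputable def Lfun (x : ℝ) : ℝ :=
  Real.exp (Real.log x * Real.log (Real.log (Real.log x)) / Real.log (Real.log x))

lemma part_count (k j : ℕ) :
    Nat.card {P : Finpartition (Finset.univ : Finset (Fin k)) // P.parts.card = j}
      * j.factorial ≤ j ^ k := by
  classical
  have key : Nat.card ({P : Finpartition (Finset.univ : Finset (Fin k)) // P.parts.card = j}
      × Equiv.Perm (Fin j)) ≤ Nat.card (Fin k → Fin j) := by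
    set S := {P : Finpartition (Finset.univ : Finset (Fin k)) // P.parts.card = j}
    have e : ∀ P : S, (↥(P.1.parts) ≃ Fin j) := fun P =>
      Fintype.equivFinOfCardEq (by rw [Fintype.card_coe]; exact P.2)
    set Φ : S × Equiv.Perm (Fin j) → (Fin k → Fin j) := fun z x =>
      z.2 (e z.1 ⟨z.1.1.part x, z.1.1.part_mem.2 (mem_univ x)⟩) with hΦ
    apply Nat.card_le_card_of_injective Φ
    rintro ⟨⟨P, hP⟩, σ⟩ ⟨⟨Q, hQ⟩, τ⟩ h
    have hfun : ∀ x : Fin k, σ (e ⟨P, hP⟩ ⟨P.part x, P.part_mem.2 (mem_univ x)⟩)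
        = τ (e ⟨Q, hQ⟩ ⟨Q.part x, Q.part_mem.2 (mem_univ x)⟩) := fun x => congrFun h x
    -- parts agree pointwise
    have hpart : ∀ x : Fin k, P.part x = Q.part x := by
      intro x
      ext y
      have h1 : y ∈ P.part x ↔ P.part y = P.part x :=
        P.mem_part_iff_part_eq_part (mem_univ y) (mem_univ x)
      have h2 : y ∈ Q.part x ↔ Q.part y = Q.part x :=
        Q.mem_part_iff_part_eq_part (mem_univ y) (mem_univ x)
      rw [h1, h2]
      constructor
      · intro hyx
        have h3 := hfun y
        rw [show (⟨P.part y, P.part_mem.2 (mem_univ y)⟩ : ↥P.parts)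
            = ⟨P.part x, P.part_mem.2 (mem_univ x)⟩ from Subtype.ext hyx] at h3
        have h4 := (e ⟨Q, hQ⟩).injective (τ.injective ((hfun x).symm.trans h3)).symm
        exact congrArg Subtype.val h4
      · intro hyx
        have h3 := hfun y
        rw [show (⟨Q.part y, Q.part_mem.2 (mem_univ y)⟩ : ↥Q.parts)
            = ⟨Q.part x, Q.part_mem.2 (mem_univ x)⟩ from Subtype.ext hyx] at h3
        have h4 := (e ⟨P, hP⟩).injective (σ.injective ((hfun x).trans h3.symm)).symm
        exact congrArg Subtype.val h4
    have hPQ : P = Q := by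
      apply Finpartition.ext
      ext t
      constructor
      · intro ht
        obtain ⟨a, ha⟩ := P.nonempty_of_mem_parts ht
        have : P.part a = t := P.part_eq_of_mem ht ha
        rw [← this, hpart a]
        exact Q.part_mem.2 (mem_univ a)
      · intro ht
        obtain ⟨a, ha⟩ := Q.nonempty_of_mem_parts ht
        have : Q.part a = t := Q.part_eq_of_mem ht ha
        rw [← this, ← hpart a]
        exact P.part_mem.2 (mem_univ a)
    subst hPQ
    have hστ : σ = τ := by
      ext i
      obtain ⟨t, ht⟩ : ∃ t : ↥P.parts, e ⟨P, hP⟩ t = i := ⟨(e ⟨P, hP⟩).symm i, by simp⟩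
      obtain ⟨a, ha⟩ := P.nonempty_of_mem_parts t.2
      have hta : P.part a = t.1 := P.part_eq_of_mem t.2 ha
      have h1 : (⟨P.part a, P.part_mem.2 (mem_univ a)⟩ : ↥P.parts) = t := Subtype.ext hta
      have h2 := hfun a
      rw [h1] at h2
      rw [ht] at h2
      exact congrArg Fin.val h2
    exact Prod.ext (Subtype.ext rfl) hστ
  calc Nat.card {P : Finpartition (Finset.univ : Finset (Fin k)) // P.parts.card = j}
        * j.factorial
      = Nat.card ({P : Finpartition (Finset.univ : Finset (Fin k)) // P.parts.card = j}
      × Equiv.Perm (Fin j)) := by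
        rw [Nat.card_prod, Nat.card_eq_fintype_card (α := Equiv.Perm (Fin j)),
          Fintype.card_perm, Fintype.card_fin]
    _ ≤ Nat.card (Fin k → Fin j) := key
    _ = j ^ k := by
        rw [Nat.card_eq_fintype_card, Fintype.card_fun, Fintype.card_fin, Fintype.card_fin]

lemma bell_eq_sum (k : ℕ) :
    bell k = ∑ j ∈ Finset.range (k + 1),
      Nat.card {P : Finpartition (Finset.univ : Finset (Fin k)) // P.parts.card = j} := by
  classical
  rw [bell, Nat.card_eq_fintype_card, ← Finset.card_univ]
  rw [Finset.card_eq_sum_card_fiberwise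
    (f := fun P : Finpartition (Finset.univ : Finset (Fin k)) => P.parts.card)
    (t := Finset.range (k + 1))
    (fun P _ => Finset.mem_range.2 (Nat.lt_succ_of_le (by
      simpa using P.card_parts_le_card)))]
  refine Finset.sum_congr rfl fun j _ => ?_
  rw [Nat.card_eq_fintype_card, Fintype.card_subtype]

lemma bell_le_real (k : ℕ) (hk : 3 ≤ k) :
    (bell k : ℝ) ≤ (k.factorial : ℝ) * Real.exp k / (Real.log k) ^ k := by
  have hk3 : (3:ℝ) ≤ (k:ℝ) := by exact_mod_cast hk
  set t := Real.log k with ht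
  have htpos : 0 < t := Real.log_pos (by linarith)
  have hexpt : Real.exp t = k := Real.exp_log (by linarith)
  have hterm : ∀ j : ℕ,
      (Nat.card {P : Finpartition (Finset.univ : Finset (Fin k)) // P.parts.card = j} : ℝ)
        ≤ ((k.factorial : ℝ) / t ^ k) * (Real.exp t ^ j / (j.factorial : ℝ)) := by
    intro j
    have hjf : (0:ℝ) < (j.factorial : ℝ) := by exact_mod_cast j.factorial_pos
    have hc : (Nat.card {P : Finpartition (Finset.univ : Finset (Fin k)) //
        P.parts.card = j} : ℝ) * (j.factorial : ℝ) ≤ ((j:ℝ)) ^ k := by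
      exact_mod_cast part_count k j
    have hu : (0:ℝ) ≤ t * j := by positivity
    have hsingle : (t * (j:ℝ)) ^ k / (k.factorial : ℝ) ≤ Real.exp (t * j) := by
      refine le_trans ?_ (Real.sum_le_exp_of_nonneg hu (k+1))
      exact Finset.single_le_sum (f := fun i => (t*(j:ℝ))^i / (i.factorial : ℝ))
        (fun i _ => by positivity) (Finset.mem_range.2 (Nat.lt_succ_self k))
    have hjk : ((j:ℝ)) ^ k ≤ (k.factorial : ℝ) * Real.exp (t * j) / t ^ k := by
      rw [le_div_iff₀ (by positivity)]
      have h5 : (t*(j:ℝ))^k ≤ (k.factorial:ℝ) * Real.exp (t*(j:ℝ)) := by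
        rw [div_le_iff₀ (by positivity : (0:ℝ) < (k.factorial:ℝ))] at hsingle
        linarith
      calc ((j:ℝ))^k * t^k = (t*(j:ℝ))^k := by rw [mul_pow]; ring
        _ ≤ (k.factorial:ℝ) * Real.exp (t*(j:ℝ)) := h5
    have hej : Real.exp (t*(j:ℝ)) = Real.exp t ^ j := by
      rw [mul_comm, Real.exp_nat_mul]
    calc (Nat.card {P : Finpartition (Finset.univ : Finset (Fin k)) //
          P.parts.card = j} : ℝ)
        ≤ ((j:ℝ))^k / (j.factorial:ℝ) := by rw [le_div_iff₀ hjf]; exact hc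
      _ ≤ ((k.factorial : ℝ) * Real.exp (t * j) / t ^ k) / (j.factorial:ℝ) := by
          gcongr
      _ = ((k.factorial : ℝ) / t ^ k) * (Real.exp t ^ j / (j.factorial : ℝ)) := by
          rw [hej]; ring
  calc (bell k : ℝ)
      = ∑ j ∈ Finset.range (k+1),
        (Nat.card {P : Finpartition (Finset.univ : Finset (Fin k)) //
          P.parts.card = j} : ℝ) := by
        rw [bell_eq_sum k]; push_cast; ring
    _ ≤ ∑ j ∈ Finset.range (k+1),
        ((k.factorial : ℝ) / t ^ k) * (Real.exp t ^ j / (j.factorial : ℝ)) :=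
        Finset.sum_le_sum fun j _ => hterm j
    _ = ((k.factorial : ℝ) / t ^ k) * ∑ j ∈ Finset.range (k+1),
        (Real.exp t ^ j / (j.factorial : ℝ)) := by rw [Finset.mul_sum]
    _ ≤ ((k.factorial : ℝ) / t ^ k) * Real.exp (Real.exp t) :=
        mul_le_mul_of_nonneg_left
          (Real.sum_le_exp_of_nonneg (Real.exp_nonneg t) (k+1)) (by positivity)
    _ = (k.factorial : ℝ) * Real.exp k / t ^ k := by rw [hexpt]; ring

lemma log_le_half {z : ℝ} (hz : 0 ≤ z) : Real.log z ≤ z / 2 := by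
  rcases eq_or_lt_of_le hz with h | h
  · simp [← h]
  rcases le_or_gt z 2 with h2 | h2
  · have := Real.log_le_sub_one_of_pos h
    linarith
  · have ha : Real.log z = Real.log 2 + Real.log (z/2) := by
      rw [← Real.log_mul (by norm_num) (by positivity)]
      ring_nf
    have hb : Real.log (z/2) ≤ z/2 - 1 := Real.log_le_sub_one_of_pos (by linarith)
    have hc : Real.log 2 ≤ 1 := by
      have := Real.log_le_sub_one_of_pos (by norm_num : (0:ℝ) < 2); linarith
    linarith

lemma rhs_eq (F x L a b c' : ℝ) (hF : F ≠ 0) (hL : L ≠ 0) :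
    F * Real.exp a / Real.exp c' * (x / (F * L) * Real.exp b)
      = x / L * Real.exp (a + b - c') := by
  rw [Real.exp_sub, Real.exp_add]
  have h3 := Real.exp_ne_zero c'
  field_simp

lemma tendsto_half_sub_two_log :
    Filter.Tendsto (fun y : ℝ => y / 2 - 2 * Real.log y) atTop atTop := by
  have h := Real.isLittleO_log_id_atTop.bound (show (0:ℝ) < 1/8 by norm_num)
  refine tendsto_atTop_mono' atTop ?_
    ((tendsto_id (α := ℝ) (x := atTop)).atTop_div_const (by norm_num : (0:ℝ) < 4))
  filter_upwards [h, eventually_ge_atTop (0:ℝ)] with y hy hy0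
  simp only [Real.norm_eq_abs, id] at hy ⊢
  rw [abs_of_nonneg hy0] at hy
  have h1 : Real.log y ≤ y / 8 := by
    have := le_abs_self (Real.log y); linarith
  linarith

theorem bell_piOmega_bounded
    (hpom : ∀ ε : ℝ, 0 < ε → ∃ X : ℝ, ∀ x : ℝ, X ≤ x → ∀ k : ℕ,
      Real.log (Real.log x) ^ 2 ≤ (k : ℝ) →
      (k : ℝ) ≤ Real.log x / (3 * Real.log (Real.log x)) →
      x / ((Nat.factorial k : ℝ) * Real.log x) *
          Real.exp ((k : ℝ) *
            Real.log (Real.log (Real.log x) - Real.log k - Real.log (Real.log k)) - ε * k) ≤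
        (piOmega x k : ℝ) ∧
      (piOmega x k : ℝ) ≤ x / ((Nat.factorial k : ℝ) * Real.log x) *
          Real.exp ((k : ℝ) *
            Real.log (Real.log (Real.log x) - Real.log k - Real.log (Real.log k)) + ε * k)) :
    ∀ c : ℝ, 0 < c → ∃ C : ℝ, ∃ X : ℝ, ∀ x : ℝ, X ≤ x → ∀ k : ℕ,
      Real.log (Real.log x) ^ 2 ≤ (k : ℝ) →
      (k : ℝ) ≤ Real.log x / (3 * Real.log (Real.log x)) →
      c * Real.log x / Real.log (Real.log x) ^ 2 ≤ (k : ℝ) →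
      (bell k : ℝ) * (piOmega x k : ℝ) ≤ C * x := by
  intro c hc
  obtain ⟨X₀, hX₀⟩ := hpom 1 one_pos
  set M : ℝ := 2 + |Real.log c| with hMdef
  have hMpos : (0:ℝ) < M := by positivity
  have hL : Filter.Tendsto (fun x : ℝ => Real.log x) atTop atTop := Real.tendsto_log_atTop
  have hLL : Filter.Tendsto (fun x : ℝ => Real.log (Real.log x)) atTop atTop :=
    Real.tendsto_log_atTop.comp hL
  have hLLL : Filter.Tendsto (fun x : ℝ => Real.log (Real.log (Real.log x))) atTop atTop :=
    Real.tendsto_log_atTop.comp hLL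
  have hev : ∀ᶠ x : ℝ in atTop, 1 ≤ x ∧ X₀ ≤ x ∧ 1 ≤ Real.log x ∧
      2 ≤ Real.log (Real.log x) ∧
      1 ≤ Real.log (Real.log (Real.log x)) ∧
      |Real.log c| ≤ Real.log (Real.log (Real.log x)) ∧
      2 * (2 + Real.log 2 + Real.log M) ≤ Real.log (Real.log (Real.log x)) ∧
      -Real.log c ≤ Real.log (Real.log x) / 2 -
        2 * Real.log (Real.log (Real.log x)) := by
    filter_upwards [eventually_ge_atTop (1:ℝ), eventually_ge_atTop X₀,
      hL.eventually_ge_atTop 1, hLL.eventually_ge_atTop 2, hLLL.eventually_ge_atTop 1,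
      hLLL.eventually_ge_atTop |Real.log c|,
      hLLL.eventually_ge_atTop (2 * (2 + Real.log 2 + Real.log M)),
      (tendsto_half_sub_two_log.comp hLL).eventually_ge_atTop (-Real.log c)]
      with x a1 a2 a3 a4 a5 a6 a7 a8
    exact ⟨a1, a2, a3, a4, a5, a6, a7, a8⟩
  obtain ⟨X, hX⟩ := eventually_atTop.mp hev
  refine ⟨1, X, fun x hx k h1 h2 h3 => ?_⟩
  obtain ⟨hx1, hxX0, hL1, hLL2, hLLL1, hLLLc, hLLLM, hA5⟩ := hX x hx
  -- basic facts about k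
  have hk3 : 3 ≤ k := by
    have h4 : (4:ℝ) ≤ (k:ℝ) := le_trans (by nlinarith) h1
    exact_mod_cast (by linarith : (3:ℝ) ≤ (k:ℝ))
  have hkR : (3:ℝ) ≤ (k:ℝ) := by exact_mod_cast hk3
  have hkpos : (0:ℝ) < (k:ℝ) := by linarith
  have hbell := bell_le_real k hk3
  have hpi := (hX₀ x hxX0 k h1 h2).2
  set L : ℝ := Real.log x with hLdef
  set LL : ℝ := Real.log L with hLLdef
  set LLL : ℝ := Real.log LL with hLLLdef
  set lk : ℝ := Real.log (k:ℝ) with hlkdef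
  set llk : ℝ := Real.log lk with hllkdef
  set L0 : ℝ := LL - lk - llk with hL0def
  clear_value L0 llk lk LLL LL L
  have hLpos : (0:ℝ) < L := by linarith
  have hLLpos : (0:ℝ) < LL := by linarith
  have hLLLpos : (0:ℝ) < LLL := by linarith
  -- f1 : 2 * LLL ≤ lk
  have f1 : 2 * LLL ≤ lk := by
    have := Real.log_le_log (by positivity : (0:ℝ) < LL ^ 2) h1
    rw [hlkdef, hLLLdef]
    rw [Real.log_pow] at this
    push_cast at this
    linarith
  have hlk2 : 2 ≤ lk := by linarith
  have hlkpos : (0:ℝ) < lk := by linarith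
  -- f2 : lk ≤ LL - (log 3 + LLL)
  have f2 : lk ≤ LL - (Real.log 3 + LLL) := by
    have := Real.log_le_log hkpos h2
    rw [Real.log_div (ne_of_gt hLpos) (by positivity),
      Real.log_mul (by norm_num) (ne_of_gt hLLpos)] at this
    rw [hlkdef]
    linarith
  have hlog3 : (0:ℝ) < Real.log 3 := Real.log_pos (by norm_num)
  -- f3 : llk ≤ LLL
  have f3 : llk ≤ LLL := by
    have := Real.log_le_log hlkpos (by linarith : lk ≤ LL)
    rw [hllkdef, hLLLdef]; exact this
  have f4 : Real.log 3 ≤ L0 := by rw [hL0def]; linarith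
  have hL0pos : (0:ℝ) < L0 := lt_of_lt_of_le hlog3 f4
  -- f6 : log c + LL - 2 * LLL ≤ lk
  have f6 : Real.log c + LL - 2 * LLL ≤ lk := by
    have hq : (0:ℝ) < c * L / LL ^ 2 := by positivity
    have := Real.log_le_log hq h3
    rw [Real.log_div (by positivity) (by positivity),
      Real.log_mul (ne_of_gt hc) (ne_of_gt hLpos), Real.log_pow] at this
    rw [hlkdef]
    push_cast at this
    linarith
  -- f7 : LLL - log 2 ≤ llk
  have f7 : LLL - Real.log 2 ≤ llk := by
    have h7a : LL / 2 ≤ lk := by linarith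
    have := Real.log_le_log (by linarith : (0:ℝ) < LL / 2) h7a
    rw [Real.log_div (ne_of_gt hLLpos) (by norm_num)] at this
    rw [hllkdef, hLLLdef]
    linarith
  have f8' : 0 ≤ llk := by rw [hllkdef]; exact Real.log_nonneg (by linarith)
  have f8 : L0 ≤ 2 * LLL - Real.log c := by rw [hL0def]; linarith
  -- hA6
  have hA6 : 2 + Real.log (2 * LLL - Real.log c) ≤ LLL - Real.log 2 := by
    have habs : -|Real.log c| ≤ Real.log c := neg_abs_le _
    have hzpos : (0:ℝ) < 2 * LLL - Real.log c := by
      have := le_abs_self (Real.log c); linarith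
    have hble : 2 * LLL - Real.log c ≤ M * LLL := by nlinarith [le_abs_self (Real.log c)]
    have hlogb : Real.log (2 * LLL - Real.log c) ≤ Real.log M + Real.log LLL := by
      have := Real.log_le_log hzpos hble
      rwa [Real.log_mul (ne_of_gt hMpos) (ne_of_gt hLLLpos)] at this
    have hhalf : Real.log LLL ≤ LLL / 2 := log_le_half (le_of_lt hLLLpos)
    linarith
  -- key exponent inequality
  have f9 : 2 + Real.log L0 ≤ llk := by
    have := Real.log_le_log hL0pos f8
    linarith
  -- assemble
  have hfacpos : (0:ℝ) < (k.factorial : ℝ) := by exact_mod_cast k.factorial_pos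
  have hbnn : (0:ℝ) ≤ (k.factorial : ℝ) * Real.exp (k:ℝ) / lk ^ k :=
    le_of_lt (div_pos (by positivity) (pow_pos hlkpos k))
  have hstep : (bell k : ℝ) * (piOmega x k : ℝ) ≤
      ((k.factorial : ℝ) * Real.exp (k:ℝ) / lk ^ k) *
        (x / ((k.factorial : ℝ) * L) * Real.exp ((k:ℝ) * Real.log L0 + 1 * (k:ℝ))) :=
    mul_le_mul hbell hpi (by positivity) hbnn
  have hlkpow : lk ^ k = Real.exp ((k:ℝ) * llk) := by
    rw [Real.exp_nat_mul, hllkdef, Real.exp_log hlkpos]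
  have hRHS : ((k.factorial : ℝ) * Real.exp (k:ℝ) / lk ^ k) *
      (x / ((k.factorial : ℝ) * L) * Real.exp ((k:ℝ) * Real.log L0 + 1 * (k:ℝ)))
      = (x / L) * (Real.exp ((k:ℝ) + ((k:ℝ) * Real.log L0 + 1 * (k:ℝ)) - (k:ℝ) * llk)) := by
    rw [hlkpow]
    exact rhs_eq _ _ _ _ _ _ (ne_of_gt hfacpos) (ne_of_gt hLpos)
  have hexp1 : Real.exp ((k:ℝ) + ((k:ℝ) * Real.log L0 + 1 * (k:ℝ)) - (k:ℝ) * llk) ≤ 1 := by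
    rw [Real.exp_le_one_iff]
    have h' : (k:ℝ) * (2 + Real.log L0) ≤ (k:ℝ) * llk :=
      mul_le_mul_of_nonneg_left f9 hkpos.le
    rw [mul_add] at h'
    linarith
  have hxL : x / L ≤ x := div_le_self (by linarith) hL1
  calc (bell k : ℝ) * (piOmega x k : ℝ)
      ≤ (x / L) * (Real.exp ((k:ℝ) + ((k:ℝ) * Real.log L0 + 1 * (k:ℝ)) - (k:ℝ) * llk)) := by
        rw [← hRHS]; exact hstep
    _ ≤ (x / L) * 1 := mul_le_mul_of_nonneg_left hexp1 (by positivity)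
    _ ≤ 1 * x := by rw [mul_one, one_mul]; exact hxL
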